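/- (Lemma 3.2.) Let P be a finite set of points in the plane in convex position with radii r_p ≥ 0, let S be a dominating set of the disk graph G(P), and let φ : 𝒜 → S be a Lemma-3.1 assignment. Then there exists a point p ∈ S whose group 𝒜_p consists of exactly one sublist (namely the main sublist of p). -/

import Mathlib

noncomputable section

/-- The plane ℝ². -/
abbrev Plane : Type := EuclideanSpace ℝ (Fin 2)

/-- Two point sets `A` and `B` are line-separable: there is a nonzero linear functional
`u` and a constant `c` with `u ≤ c` on `A` and `u ≥ c` on `B`. -/
def LineSep (A B : Set Plane) : Prop :=
  ∃ u : Plane →ₗ[ℝ] ℝ, u ≠ 0 ∧ ∃ c : ℝ, (∀ a ∈ A, u a ≤ c) ∧ (∀ b ∈ B, c ≤ u b)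

/-- The planar cross product (signed area determinant). -/
def det2 (u v : Plane) : ℝ := u 0 * v 1 - u 1 * v 0

/-- `p : ZMod n → Plane` lists points in convex position in counterclockwise order:
every point other than `p i` and `p (i+1)` lies strictly to the left of the directed
line from `p i` to `p (i+1)`. -/
def CCWConvex {n : ℕ} (p : ZMod n → Plane) : Prop :=
  ∀ i j : ZMod n, j ≠ i → j ≠ i + 1 →
    0 < det2 (p (i + 1) - p i) (p j - p i)

set_option maxHeartbeats 1000000

private lemma natCast_ne_natCast {n : ℕ} [NeZero n] {x y : ℕ} (hx : x < n) (hy : y < n)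
    (hxy : x ≠ y) : (x : ZMod n) ≠ (y : ZMod n) := by
  intro h
  have h2 := congrArg ZMod.val h
  rw [ZMod.val_natCast, ZMod.val_natCast, Nat.mod_eq_of_lt hx, Nat.mod_eq_of_lt hy] at h2
  exact hxy h2

private lemma det2_cyclic (a b c : Plane) : det2 (b - a) (c - a) = det2 (c - b) (a - b) := by
  simp only [det2, PiLp.sub_apply]; ring

private lemma ker_det2 (u : Plane →ₗ[ℝ] ℝ) (hu : u ≠ 0) (v w : Plane)
    (hv : u v = 0) (hw : u w = 0) : det2 v w = 0 := by
  have hrep : ∀ x : Plane, u x = x 0 * u (EuclideanSpace.single (0 : Fin 2) (1:ℝ)) +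
      x 1 * u (EuclideanSpace.single (1 : Fin 2) (1:ℝ)) := by
    intro x
    have hx : x = x 0 • EuclideanSpace.single (0 : Fin 2) (1:ℝ) +
        x 1 • EuclideanSpace.single (1 : Fin 2) (1:ℝ) := by
      ext i
      fin_cases i <;>
        simp [PiLp.add_apply, PiLp.smul_apply, EuclideanSpace.single_apply]
    conv_lhs => rw [hx]
    rw [map_add, map_smul, map_smul, smul_eq_mul, smul_eq_mul]
  have h01 : u (EuclideanSpace.single (0 : Fin 2) (1:ℝ)) ≠ 0 ∨
      u (EuclideanSpace.single (1 : Fin 2) (1:ℝ)) ≠ 0 := by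
    by_contra hcon
    push_neg at hcon
    apply hu
    apply LinearMap.ext
    intro x
    rw [LinearMap.zero_apply, hrep x, hcon.1, hcon.2]
    ring
  rw [hrep v] at hv
  rw [hrep w] at hw
  rcases h01 with h | h
  · have key : u (EuclideanSpace.single (0 : Fin 2) (1:ℝ)) * det2 v w = 0 := by
      simp only [det2]
      linear_combination w 1 * hv - v 1 * hw
    rcases mul_eq_zero.mp key with h' | h'
    · exact absurd h' h
    · exact h'
  · have key : u (EuclideanSpace.single (1 : Fin 2) (1:ℝ)) * det2 v w = 0 := by
      simp only [det2]
      linear_combination v 0 * hw - w 0 * hv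
    rcases mul_eq_zero.mp key with h' | h'
    · exact absurd h' h
    · exact h'

private lemma edge_pos {n : ℕ} [NeZero n] {p : ZMod n → Plane} (hccw : CCWConvex p)
    (z : ZMod n) {x y : ℕ} (hx : x + 1 < n) (hy : y < n) (hyx : y ≠ x) (hyx1 : y ≠ x + 1) :
    0 < det2 (p (z + ((x+1 : ℕ) : ZMod n)) - p (z + (x : ZMod n)))
      (p (z + (y : ZMod n)) - p (z + (x : ZMod n))) := by
  have h1 : (z + (x : ZMod n)) + 1 = z + ((x+1 : ℕ) : ZMod n) := by push_cast; ring
  have hne1 : z + (y : ZMod n) ≠ z + (x : ZMod n) := fun h =>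
    natCast_ne_natCast hy (lt_trans (Nat.lt_succ_self x) hx) hyx (by exact_mod_cast add_left_cancel h)
  have hne2 : z + (y : ZMod n) ≠ (z + (x : ZMod n)) + 1 := by
    rw [h1]
    exact fun h => natCast_ne_natCast hy hx hyx1 (by exact_mod_cast add_left_cancel h)
  have := hccw (z + (x : ZMod n)) (z + (y : ZMod n)) hne1 hne2
  rwa [h1] at this

private lemma triple_pos {n : ℕ} [NeZero n] {p : ZMod n → Plane} (hccw : CCWConvex p)
    (z : ZMod n) :
    ∀ g a b c : ℕ, c ≤ b + g → a < b → b < c → c < n →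
      0 < det2 (p (z + (b : ZMod n)) - p (z + (a : ZMod n)))
          (p (z + (c : ZMod n)) - p (z + (a : ZMod n)))
  | 0, a, b, c, hg, hab, hbc, _ => absurd hg (by omega)
  | (g+1), a, b, c, hg, hab, hbc, hcn => by
    by_cases hba : b = a + 1
    · subst hba
      exact edge_pos hccw z (lt_trans hbc hcn) hcn (by omega) (by omega)
    · by_cases hcb : c = b + 1
      · subst hcb
        rw [det2_cyclic]
        exact edge_pos hccw z hcn (by omega) (by omega) (by omega)
      · obtain ⟨c', rfl⟩ : ∃ c', c = c' + 1 := ⟨c - 1, by omega⟩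
        have h1 : 0 < det2 (p (z + ((a+1 : ℕ) : ZMod n)) - p (z + (a : ZMod n)))
            (p (z + (b : ZMod n)) - p (z + (a : ZMod n))) :=
          edge_pos hccw z (by omega) (by omega) (by omega) (by omega)
        have h2 : 0 < det2 (p (z + ((c'+1 : ℕ) : ZMod n)) - p (z + (c' : ZMod n)))
            (p (z + (a : ZMod n)) - p (z + (c' : ZMod n))) :=
          edge_pos hccw z (by omega) (by omega) (by omega) (by omega)
        have h2' : 0 < det2 (p (z + (c' : ZMod n)) - p (z + (a : ZMod n)))
            (p (z + ((c'+1 : ℕ) : ZMod n)) - p (z + (a : ZMod n))) := by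
          rw [det2_cyclic]
          exact h2
        have h3 : 0 < det2 (p (z + ((a+1 : ℕ) : ZMod n)) - p (z + (a : ZMod n)))
            (p (z + ((c'+1 : ℕ) : ZMod n)) - p (z + (a : ZMod n))) :=
          edge_pos hccw z (by omega) (by omega) (by omega) (by omega)
        have h4 : 0 < det2 (p (z + (b : ZMod n)) - p (z + (a : ZMod n)))
            (p (z + (c' : ZMod n)) - p (z + (a : ZMod n))) :=
          triple_pos hccw z g a b c' (by omega) hab (by omega) (by omega)
        have h5 : 0 < det2 (p (z + ((a+1 : ℕ) : ZMod n)) - p (z + (a : ZMod n)))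
            (p (z + (c' : ZMod n)) - p (z + (a : ZMod n))) :=
          edge_pos hccw z (by omega) (by omega) (by omega) (by omega)
        have gp : det2 (p (z + ((a+1 : ℕ) : ZMod n)) - p (z + (a : ZMod n)))
              (p (z + (c' : ZMod n)) - p (z + (a : ZMod n)))
            * det2 (p (z + (b : ZMod n)) - p (z + (a : ZMod n)))
              (p (z + ((c'+1 : ℕ) : ZMod n)) - p (z + (a : ZMod n)))
            = det2 (p (z + ((a+1 : ℕ) : ZMod n)) - p (z + (a : ZMod n)))
                (p (z + (b : ZMod n)) - p (z + (a : ZMod n)))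
              * det2 (p (z + (c' : ZMod n)) - p (z + (a : ZMod n)))
                (p (z + ((c'+1 : ℕ) : ZMod n)) - p (z + (a : ZMod n)))
            + det2 (p (z + ((a+1 : ℕ) : ZMod n)) - p (z + (a : ZMod n)))
                (p (z + ((c'+1 : ℕ) : ZMod n)) - p (z + (a : ZMod n)))
              * det2 (p (z + (b : ZMod n)) - p (z + (a : ZMod n)))
                (p (z + (c' : ZMod n)) - p (z + (a : ZMod n))) := by
          simp only [det2, PiLp.sub_apply]
          ring
        nlinarith [gp, h5, mul_pos h1 h2', mul_pos h3 h4]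

private lemma core_four {n : ℕ} [NeZero n] {p : ZMod n → Plane} (hccw : CCWConvex p)
    (z : ZMod n) (u : Plane →ₗ[ℝ] ℝ) (hu : u ≠ 0) (e : ℝ) {a b c d : ℕ}
    (hab : a < b) (hbc : b < c) (hcd : c < d) (hdn : d < n)
    (h1 : u (p (z + (a : ZMod n))) ≤ e) (h2 : e ≤ u (p (z + (b : ZMod n))))
    (h3 : u (p (z + (c : ZMod n))) ≤ e) (h4 : e ≤ u (p (z + (d : ZMod n)))) : False := by
  have tri : ∀ a' b' c' : ℕ, a' < b' → b' < c' → c' < n →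
      0 < det2 (p (z + (b' : ZMod n)) - p (z + (a' : ZMod n)))
        (p (z + (c' : ZMod n)) - p (z + (a' : ZMod n))) :=
    fun a' b' c' h1' h2' h3' => triple_pos hccw z c' a' b' c' (by omega) h1' h2' h3'
  set x1 := p (z + (a : ZMod n)) with hx1
  set x2 := p (z + (b : ZMod n)) with hx2
  set x3 := p (z + (c : ZMod n)) with hx3
  set x4 := p (z + (d : ZMod n)) with hx4
  have D123 := tri a b c hab hbc (by omega)
  have D124 := tri a b d hab (by omega) hdn
  have D134 := tri a c d (by omega) hcd hdn
  have D234 := tri b c d hbc hcd hdn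
  rw [← hx1, ← hx2, ← hx3] at D123
  rw [← hx1, ← hx2, ← hx4] at D124
  rw [← hx1, ← hx3, ← hx4] at D134
  rw [← hx2, ← hx3, ← hx4] at D234
  have hvec : det2 (x2 - x1) (x3 - x1) • x4
      = det2 (x2 - x4) (x3 - x4) • x1 + det2 (x3 - x4) (x1 - x4) • x2
        + det2 (x1 - x4) (x2 - x4) • x3 := by
    ext i
    fin_cases i <;>
      · simp only [det2, PiLp.sub_apply, PiLp.add_apply, PiLp.smul_apply, smul_eq_mul, Fin.mk_zero, Fin.mk_one, Fin.isValue]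
        ring
  have hsc : det2 (x2 - x1) (x3 - x1) * u x4
      = det2 (x2 - x4) (x3 - x4) * u x1 + det2 (x3 - x4) (x1 - x4) * u x2
        + det2 (x1 - x4) (x2 - x4) * u x3 := by
    have h := congrArg u hvec
    simpa [map_add, map_smul, smul_eq_mul] using h
  have hsum : det2 (x2 - x1) (x3 - x1)
      = det2 (x2 - x4) (x3 - x4) + det2 (x3 - x4) (x1 - x4) + det2 (x1 - x4) (x2 - x4) := by
    simp only [det2, PiLp.sub_apply]; ring
  have hα : 0 < det2 (x2 - x4) (x3 - x4) := by
    have hid : det2 (x2 - x4) (x3 - x4) = det2 (x3 - x2) (x4 - x2) := by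
      simp only [det2, PiLp.sub_apply]; ring
    rw [hid]; exact D234
  have hβ : det2 (x3 - x4) (x1 - x4) < 0 := by
    have hid : det2 (x3 - x4) (x1 - x4) = - det2 (x3 - x1) (x4 - x1) := by
      simp only [det2, PiLp.sub_apply]; ring
    rw [hid]; linarith [D134]
  have hγ : 0 < det2 (x1 - x4) (x2 - x4) := by
    have hid : det2 (x1 - x4) (x2 - x4) = det2 (x2 - x1) (x4 - x1) := by
      simp only [det2, PiLp.sub_apply]; ring
    rw [hid]; exact D124
  have key : det2 (x2 - x1) (x3 - x1) * (u x4 - e)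
      = det2 (x2 - x4) (x3 - x4) * (u x1 - e) + det2 (x3 - x4) (x1 - x4) * (u x2 - e)
        + det2 (x1 - x4) (x2 - x4) * (u x3 - e) := by
    linear_combination hsc - e * hsum
  have t1 : det2 (x2 - x4) (x3 - x4) * (u x1 - e) ≤ 0 := by nlinarith
  have t2 : det2 (x3 - x4) (x1 - x4) * (u x2 - e) ≤ 0 := by nlinarith
  have t3 : det2 (x1 - x4) (x2 - x4) * (u x3 - e) ≤ 0 := by nlinarith
  have hD4 : 0 ≤ det2 (x2 - x1) (x3 - x1) * (u x4 - e) := by nlinarith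
  have z1 : det2 (x2 - x4) (x3 - x4) * (u x1 - e) = 0 :=
    le_antisymm t1 (by linarith)
  have z2 : det2 (x3 - x4) (x1 - x4) * (u x2 - e) = 0 :=
    le_antisymm t2 (by linarith)
  have z3 : det2 (x1 - x4) (x2 - x4) * (u x3 - e) = 0 :=
    le_antisymm t3 (by linarith)
  have f1 : u x1 = e := by
    rcases mul_eq_zero.mp z1 with h | h
    · exact absurd h hα.ne'
    · linarith
  have f2 : u x2 = e := by
    rcases mul_eq_zero.mp z2 with h | h
    · exact absurd h hβ.ne
    · linarith
  have f3 : u x3 = e := by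
    rcases mul_eq_zero.mp z3 with h | h
    · exact absurd h hγ.ne'
    · linarith
  have hv : u (x2 - x1) = 0 := by rw [map_sub, f1, f2]; ring
  have hw : u (x3 - x1) = 0 := by rw [map_sub, f1, f3]; ring
  have := ker_det2 u hu _ _ hv hw
  linarith [D123]

/-- `S` is a dominating set of the disk graph on the points `p 0, …, p (n-1)` with
radii `r`: `S` is a set of these points, and the disk of every point intersects the
disk of some point of `S`. -/
def IsDominating {n : ℕ} (p : ZMod n → Plane) (r : Plane → ℝ) (S : Set Plane) : Prop :=
  S ⊆ Set.range p ∧ ∀ q ∈ Set.range p, ∃ s ∈ S, dist q s ≤ r q + r s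

/-- A partition of the cyclic point sequence `p 0, …, p (n-1)` into `m` nonempty
contiguous sublists `α_0, …, α_{m-1}` listed counterclockwise: the sublist `α_j`
consists of the `len j` consecutive points starting at cyclic position
`start + (sum of the lengths of the sublists before j)`. -/
structure SublistPartition (n m : ℕ) [NeZero m] where
  start : ZMod n
  len : ZMod m → ℕ
  len_pos : ∀ j, 0 < len j
  len_sum : ∑ j, len j = n

variable {n m : ℕ} [NeZero m]

/-- The cyclic position offset at which the sublist `α_j` starts. -/
def SublistPartition.offset (A : SublistPartition n m) (j : ZMod m) : ℕ :=
  ∑ j' ∈ Finset.univ.filter (fun j' : ZMod m => j'.val < j.val), A.len j'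

/-- The set of points of the sublist `α_j`. -/
def SublistPartition.block (A : SublistPartition n m) (p : ZMod n → Plane)
    (j : ZMod m) : Set Plane :=
  (fun t : ℕ => p (A.start + (A.offset j : ZMod n) + (t : ZMod n))) '' Set.Iio (A.len j)

private lemma val_add_natCast (j : ZMod m) (c : ℕ) :
    (j + (c : ZMod m)).val = (j.val + c) % m := by
  rw [ZMod.val_add, ZMod.val_natCast]
  conv_rhs => rw [Nat.add_mod]
  rw [Nat.mod_eq_of_lt (ZMod.val_lt j)]

private lemma offset_lt_offset (A : SublistPartition n m)
    {j j' : ZMod m} (h : j.val < j'.val) : A.offset j < A.offset j' := by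
  apply Finset.sum_lt_sum_of_subset (i := j)
  · intro t ht
    simp only [Finset.mem_filter, Finset.mem_univ, true_and] at *
    omega
  · exact Finset.mem_filter.mpr ⟨Finset.mem_univ j, h⟩
  · simp only [Finset.mem_filter, Finset.mem_univ, true_and]
    omega
  · exact A.len_pos j
  · intro t _ _
    exact Nat.zero_le _

private lemma offset_add_len_le (A : SublistPartition n m) (j : ZMod m) :
    A.offset j + A.len j ≤ n := by
  have hnotmem : j ∉ Finset.univ.filter (fun j' : ZMod m => j'.val < j.val) := by
    simp
  have heq : A.offset j + A.len j
      = ∑ t ∈ insert j (Finset.univ.filter (fun j' : ZMod m => j'.val < j.val)), A.len t := by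
    rw [Finset.sum_insert hnotmem]
    exact Nat.add_comm _ _
  calc A.offset j + A.len j
      = ∑ t ∈ insert j (Finset.univ.filter (fun j' : ZMod m => j'.val < j.val)), A.len t := heq
    _ ≤ ∑ t, A.len t := Finset.sum_le_sum_of_subset (Finset.subset_univ _)
    _ = n := A.len_sum

private lemma start_mem_block (A : SublistPartition n m) (p : ZMod n → Plane) (j : ZMod m) :
    p (A.start + (A.offset j : ZMod n)) ∈ A.block p j := by
  refine ⟨0, A.len_pos j, ?_⟩
  simp

/-- The group `𝒜_s` of a center `s`: the points of all sublists assigned to `s`. -/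
def group (A : SublistPartition n m) (p : ZMod n → Plane) (φ : ZMod m → Plane)
    (s : Plane) : Set Plane :=
  {x | ∃ j, φ j = s ∧ x ∈ A.block p j}

/-- `φ` is an assignment of the sublists of the partition `A` to points of `S`:
each sublist `α_j` is assigned a point `φ j ∈ S` whose disk intersects the disk
of every point of `α_j`. -/
def IsAssignment (A : SublistPartition n m) (p : ZMod n → Plane) (r : Plane → ℝ)
    (S : Set Plane) (φ : ZMod m → Plane) : Prop :=
  (∀ j, φ j ∈ S) ∧ ∀ j, ∀ x ∈ A.block p j, dist x (φ j) ≤ r x + r (φ j)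

/-- A Lemma-3.1 assignment: an assignment that is line-separable, such that
(1) every `s ∈ S` lies in one of its own sublists (its main sublist), and
(2) cyclically adjacent sublists are assigned to different points of `S`. -/
def IsLemma31Assignment (A : SublistPartition n m) (p : ZMod n → Plane) (r : Plane → ℝ)
    (S : Set Plane) (φ : ZMod m → Plane) : Prop :=
  IsAssignment A p r S φ ∧
  (∀ s ∈ S, ∀ s' ∈ S, s ≠ s' → LineSep (group A p φ s) (group A p φ s')) ∧
  (∀ s ∈ S, ∃ j, φ j = s ∧ s ∈ A.block p j) ∧
  (∀ j : ZMod m, j + 1 ≠ j → φ (j + 1) ≠ φ j)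

/-- **Lemma 3.2.** If `S` is a dominating set of the disk graph of points in convex
position and `φ` is a Lemma-3.1 assignment, then some point `s ∈ S` has exactly one
sublist assigned to it (namely its main sublist, which contains `s`). -/
theorem exists_center_with_single_sublist {n m : ℕ} [NeZero n] [NeZero m]
    (p : ZMod n → Plane) (hccw : CCWConvex p)
    (r : Plane → ℝ) (hr : ∀ i, 0 ≤ r (p i))
    (S : Set Plane) (hS : IsDominating p r S)
    (A : SublistPartition n m) (φ : ZMod m → Plane)
    (hφ : IsLemma31Assignment A p r S φ) :
    ∃ s ∈ S, ∃ j : ZMod m, φ j = s ∧ s ∈ A.block p j ∧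
      ∀ j' : ZMod m, φ j' = s → j' = j := by
  classical
  obtain ⟨⟨hφS, -⟩, hsep, hmain, hadj⟩ := hφ
  by_cases hrep : ∀ j : ZMod m, ∃ k : ℕ, 0 < k ∧ k < m ∧ φ (j + (k : ZMod m)) = φ j
  case neg =>
    push_neg at hrep
    obtain ⟨j, hj⟩ := hrep
    have huniq : ∀ j' : ZMod m, φ j' = φ j → j' = j := by
      intro j' hj'
      by_contra hne
      have hvlt : (j' - j).val < m := ZMod.val_lt _
      have hvpos : 0 < (j' - j).val := by
        rcases Nat.eq_zero_or_pos (j' - j).val with h | h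
        · exfalso
          apply hne
          have h0 : j' - j = 0 := (ZMod.val_eq_zero _).mp h
          exact sub_eq_zero.mp h0
        · exact h
      have hcast : (((j' - j).val : ℕ) : ZMod m) = j' - j := ZMod.natCast_rightInverse _
      have hcontra : φ (j + (((j' - j).val : ℕ) : ZMod m)) = φ j := by
        rw [hcast, show j + (j' - j) = j' by ring]
        exact hj'
      exact hj _ hvpos hvlt hcontra
    obtain ⟨jm, hjm1, hjm2⟩ := hmain (φ j) (hφS j)
    refine ⟨φ j, hφS j, j, rfl, ?_, huniq⟩
    have hjmj := huniq jm hjm1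
    rw [hjmj] at hjm2
    exact hjm2
  case pos =>
    exfalso
    obtain ⟨j0, -, hmin⟩ := Finset.exists_min_image (Finset.univ : Finset (ZMod m))
      (fun j => Nat.find (hrep j)) ⟨0, Finset.mem_univ 0⟩
    obtain ⟨hk0pos, hk0lt, hk0eq⟩ := Nat.find_spec (hrep j0)
    have hm2 : 2 ≤ m := by omega
    have hj01 : j0 + 1 ≠ j0 := by
      intro h
      have h1 := congrArg ZMod.val h
      rw [show (1 : ZMod m) = ((1 : ℕ) : ZMod m) by norm_cast, val_add_natCast] at h1
      have hvm := ZMod.val_lt j0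
      rcases Nat.lt_or_ge (j0.val + 1) m with hlt | hge
      · rw [Nat.mod_eq_of_lt hlt] at h1
        omega
      · have hm : j0.val + 1 = m := by omega
        rw [hm, Nat.mod_self] at h1
        omega
    have hs' : φ (j0 + 1) ≠ φ j0 := hadj j0 hj01
    have hk0ge2 : 2 ≤ Nat.find (hrep j0) := by
      rcases Nat.lt_or_ge (Nat.find (hrep j0)) 2 with h | h
      · exfalso
        have h1 : Nat.find (hrep j0) = 1 := by omega
        rw [h1, Nat.cast_one] at hk0eq
        exact hs' hk0eq
      · exact h
    have hsS : φ j0 ∈ S := hφS j0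
    have hs'S : φ (j0 + 1) ∈ S := hφS (j0 + 1)
    have hneSS : φ j0 ≠ φ (j0 + 1) := Ne.symm hs'
    have hptA : ∀ (jj : ZMod m) (t : Plane), φ jj = t →
        p (A.start + (A.offset jj : ZMod n)) ∈ group A p φ t :=
      fun jj t ht => ⟨jj, ht, start_mem_block A p jj⟩
    have hoffn : ∀ jj : ZMod m, A.offset jj < n := by
      intro jj
      have h1 := offset_add_len_le A jj
      have h2 := A.len_pos jj
      omega
    have main4 : ∀ (w1 w2 w3 w4 : ZMod m) (u : Plane →ₗ[ℝ] ℝ), u ≠ 0 → ∀ e : ℝ,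
        w1.val < w2.val → w2.val < w3.val → w3.val < w4.val →
        u (p (A.start + (A.offset w1 : ZMod n))) ≤ e →
        e ≤ u (p (A.start + (A.offset w2 : ZMod n))) →
        u (p (A.start + (A.offset w3 : ZMod n))) ≤ e →
        e ≤ u (p (A.start + (A.offset w4 : ZMod n))) → False := by
      intro w1 w2 w3 w4 u hu e h12 h23 h34 b1 b2 b3 b4
      exact core_four hccw A.start u hu e (offset_lt_offset A h12) (offset_lt_offset A h23)
        (offset_lt_offset A h34) (hoffn w4) b1 b2 b3 b4
    obtain ⟨u, hu, e, hA1, hB1⟩ := hsep (φ j0) hsS (φ (j0 + 1)) hs'S hneSS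
    obtain ⟨u', hu', e', hA2, hB2⟩ := hsep (φ (j0 + 1)) hs'S (φ j0) hsS hs'
    have bs : ∀ jj : ZMod m, φ jj = φ j0 →
        u (p (A.start + (A.offset jj : ZMod n))) ≤ e := fun jj h => hA1 _ (hptA jj _ h)
    have bs' : ∀ jj : ZMod m, φ jj = φ (j0 + 1) →
        e ≤ u (p (A.start + (A.offset jj : ZMod n))) := fun jj h => hB1 _ (hptA jj _ h)
    have cs' : ∀ jj : ZMod m, φ jj = φ (j0 + 1) →
        u' (p (A.start + (A.offset jj : ZMod n))) ≤ e' := fun jj h => hA2 _ (hptA jj _ h)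
    have cs : ∀ jj : ZMod m, φ jj = φ j0 →
        e' ≤ u' (p (A.start + (A.offset jj : ZMod n))) := fun jj h => hB2 _ (hptA jj _ h)
    have hvm : j0.val < m := ZMod.val_lt j0
    have claimA : ∀ k : ℕ, Nat.find (hrep j0) < k → k < m →
        φ (j0 + (k : ZMod m)) = φ (j0 + 1) → False := by
      intro k hk0k hkm hkeq
      have F2 : φ (j0 + ((1 : ℕ) : ZMod m)) = φ (j0 + 1) := by rw [Nat.cast_one]
      have V1 : (j0 + ((1 : ℕ) : ZMod m)).val = (j0.val + 1) % m := val_add_natCast j0 1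
      have Vk0 : (j0 + ((Nat.find (hrep j0) : ℕ) : ZMod m)).val
          = (j0.val + Nat.find (hrep j0)) % m := val_add_natCast j0 _
      have Vk : (j0 + ((k : ℕ) : ZMod m)).val = (j0.val + k) % m := val_add_natCast j0 k
      rcases Nat.lt_or_ge (j0.val + k) m with c1 | c1
      · have E2 : (j0.val + 1) % m = j0.val + 1 := Nat.mod_eq_of_lt (by omega)
        have E3 : (j0.val + Nat.find (hrep j0)) % m = j0.val + Nat.find (hrep j0) :=
          Nat.mod_eq_of_lt (by omega)
        have E4 : (j0.val + k) % m = j0.val + k := Nat.mod_eq_of_lt c1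
        exact main4 j0 (j0 + ((1 : ℕ) : ZMod m)) (j0 + ((Nat.find (hrep j0) : ℕ) : ZMod m))
          (j0 + ((k : ℕ) : ZMod m)) u hu e
          (by rw [V1, E2]; omega) (by rw [V1, Vk0, E2, E3]; omega)
          (by rw [Vk0, Vk, E3, E4]; omega)
          (bs j0 rfl) (bs' _ F2) (bs _ hk0eq) (bs' _ hkeq)
      · rcases Nat.lt_or_ge (j0.val + Nat.find (hrep j0)) m with c2 | c2
        · have E2 : (j0.val + 1) % m = j0.val + 1 := Nat.mod_eq_of_lt (by omega)
          have E3 : (j0.val + Nat.find (hrep j0)) % m = j0.val + Nat.find (hrep j0) :=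
            Nat.mod_eq_of_lt c2
          have E4 : (j0.val + k) % m = j0.val + k - m := by
            rw [Nat.mod_eq_sub_mod c1, Nat.mod_eq_of_lt (by omega)]
          exact main4 (j0 + ((k : ℕ) : ZMod m)) j0 (j0 + ((1 : ℕ) : ZMod m))
            (j0 + ((Nat.find (hrep j0) : ℕ) : ZMod m)) u' hu' e'
            (by rw [Vk, E4]; omega) (by rw [V1, E2]; omega) (by rw [V1, Vk0, E2, E3]; omega)
            (cs' _ hkeq) (cs j0 rfl) (cs' _ F2) (cs _ hk0eq)
        · rcases Nat.lt_or_ge (j0.val + 1) m with c3 | c3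
          · have E2 : (j0.val + 1) % m = j0.val + 1 := Nat.mod_eq_of_lt c3
            have E3 : (j0.val + Nat.find (hrep j0)) % m = j0.val + Nat.find (hrep j0) - m := by
              rw [Nat.mod_eq_sub_mod c2, Nat.mod_eq_of_lt (by omega)]
            have E4 : (j0.val + k) % m = j0.val + k - m := by
              rw [Nat.mod_eq_sub_mod c1, Nat.mod_eq_of_lt (by omega)]
            exact main4 (j0 + ((Nat.find (hrep j0) : ℕ) : ZMod m)) (j0 + ((k : ℕ) : ZMod m))
              j0 (j0 + ((1 : ℕ) : ZMod m)) u hu e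
              (by rw [Vk0, Vk, E3, E4]; omega) (by rw [Vk, E4]; omega) (by rw [V1, E2]; omega)
              (bs _ hk0eq) (bs' _ hkeq) (bs j0 rfl) (bs' _ F2)
          · have hveq : j0.val + 1 = m := by omega
            have E2 : (j0.val + 1) % m = 0 := by rw [hveq, Nat.mod_self]
            have E3 : (j0.val + Nat.find (hrep j0)) % m = j0.val + Nat.find (hrep j0) - m := by
              rw [Nat.mod_eq_sub_mod (by omega), Nat.mod_eq_of_lt (by omega)]
            have E4 : (j0.val + k) % m = j0.val + k - m := by
              rw [Nat.mod_eq_sub_mod c1, Nat.mod_eq_of_lt (by omega)]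
            exact main4 (j0 + ((1 : ℕ) : ZMod m)) (j0 + ((Nat.find (hrep j0) : ℕ) : ZMod m))
              (j0 + ((k : ℕ) : ZMod m)) j0 u' hu' e'
              (by rw [V1, Vk0, E2, E3]; omega) (by rw [Vk0, Vk, E3, E4]; omega)
              (by rw [Vk, E4]; omega)
              (cs' _ F2) (cs _ hk0eq) (cs' _ hkeq) (cs j0 rfl)
    obtain ⟨hk1pos, hk1lt, hk1eq⟩ := Nat.find_spec (hrep (j0 + 1))
    have hre : j0 + 1 + ((Nat.find (hrep (j0 + 1)) : ℕ) : ZMod m)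
        = j0 + (((1 + Nat.find (hrep (j0 + 1)) : ℕ)) : ZMod m) := by push_cast; ring
    rcases Nat.lt_or_ge (1 + Nat.find (hrep (j0 + 1))) m with hKm | hKm
    · have hK : φ (j0 + (((1 + Nat.find (hrep (j0 + 1)) : ℕ)) : ZMod m)) = φ (j0 + 1) := by
        rw [← hre]
        exact hk1eq
      rcases Nat.lt_trichotomy (1 + Nat.find (hrep (j0 + 1))) (Nat.find (hrep j0))
        with h | h | h
      · have hminle := hmin (j0 + 1) (Finset.mem_univ _)
        omega
      · rw [h] at hK
        exact hs' (hK.symm.trans hk0eq)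
      · exact claimA _ h hKm hK
    · have hKm' : 1 + Nat.find (hrep (j0 + 1)) = m := by omega
      have h0 : φ (j0 + (((1 + Nat.find (hrep (j0 + 1)) : ℕ)) : ZMod m)) = φ j0 := by
        rw [hKm']
        simp
      rw [← hre] at h0
      exact hs' (hk1eq.symm.trans h0)

end
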